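/- Let m = (ξ_A, ξ_B) be a compatible net counter-clockwise motion from P₀ = (A₀,B₀) to P₁ = (A₁,B₁) with traces C_A = ξ_A([0,1]), C_B = ξ_B([0,1]), satisfying: (Convexity) ℓ(ξ_A) = ∫₀^{2π} h_{C_A}(θ) dθ − ‖A₁ − A₀‖ and ℓ(ξ_B) = ∫₀^{2π} h_{C_B}(θ) dθ − ‖B₁ − B₀‖; and (Minimality) for every compatible net counter-clockwise motion m' = (ξ'_A, ξ'_B) from P₀ to P₁ with traces C'_A, C'_B one has ∫₀^{2π} (h_{C_A}(θ) + h_{C_B}(θ)) dθ ≤ ∫₀^{2π} (h_{C'_A}(θ) + h_{C'_B}(θ)) dθ. Then ℓ(m) ≤ ℓ(m') for every compatible net counter-clockwise motion m' from P₀ to P₁. -/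

import Mathlib

open Set Real RealInnerProductSpace

noncomputable section

/-- The Euclidean plane ℝ². -/
abbrev Plane := EuclideanSpace ℝ (Fin 2)

/-- Unit vector at angle `θ`. -/
def uvec (θ : ℝ) : Plane := WithLp.toLp 2 ![Real.cos θ, Real.sin θ]

/-- Support function of a set `C ⊆ ℝ²` at angle `θ`. -/
def supp (C : Set Plane) (θ : ℝ) : ℝ := sSup ((fun x => ⟪x, uvec θ⟫) '' C)

/-- Length of a curve: its total variation on `[0,1]`. -/
def plen (ξ : ℝ → Plane) : ℝ := (eVariationOn ξ (Icc 0 1)).toReal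

/-- A compatible motion of two discs with radius sum `s` from placement `(A₀,B₀)`
to placement `(A₁,B₁)`. -/
structure IsCompatMotion (s : ℝ) (A₀ B₀ A₁ B₁ : Plane) (ξA ξB : ℝ → Plane) : Prop where
  contA : ContinuousOn ξA (Icc 0 1)
  contB : ContinuousOn ξB (Icc 0 1)
  bvA : BoundedVariationOn ξA (Icc 0 1)
  bvB : BoundedVariationOn ξB (Icc 0 1)
  startA : ξA 0 = A₀
  stopA : ξA 1 = A₁
  startB : ξB 0 = B₀
  stopB : ξB 1 = B₁
  compat : ∀ t ∈ Icc (0:ℝ) 1, s ≤ ‖ξA t - ξB t‖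

/-- A motion is net counter-clockwise: some continuous angle lift `θm` of
`ξA - ξB` realizes every angle `θ₀ + r (mod 2π)` for `r ∈ [0,Δ]`, where
`Δ ∈ [0,2π)` satisfies `θm 1 ≡ θm 0 + Δ (mod 2π)`. -/
def NetCCW (ξA ξB : ℝ → Plane) : Prop :=
  ∃ (θm : ℝ → ℝ) (Δ : ℝ),
    ContinuousOn θm (Icc 0 1) ∧
    (∀ t ∈ Icc (0:ℝ) 1, ξA t - ξB t = ‖ξA t - ξB t‖ • uvec (θm t)) ∧
    0 ≤ Δ ∧ Δ < 2 * π ∧ (∃ k : ℤ, θm 1 = θm 0 + Δ + 2 * π * k) ∧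
    ∀ r ∈ Icc 0 Δ, ∃ t ∈ Icc (0:ℝ) 1, ∃ k : ℤ, θm t = θm 0 + r + 2 * π * k


lemma norm_uvec (θ : ℝ) : ‖uvec θ‖ = 1 := by
  rw [EuclideanSpace.norm_eq]
  simp [uvec, Fin.sum_univ_two]

lemma uvec_add_pi (θ : ℝ) : uvec (θ + π) = -uvec θ := by
  ext i
  fin_cases i <;> simp [uvec, Real.cos_add_pi, Real.sin_add_pi]

lemma uvec_per (θ : ℝ) : uvec (θ + 2*π) = uvec θ := by
  ext i
  fin_cases i <;> simp [uvec, Real.cos_add_two_pi, Real.sin_add_two_pi]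

lemma inner_uvec (v : Plane) (θ : ℝ) : ⟪v, uvec θ⟫ = v 0 * Real.cos θ + v 1 * Real.sin θ := by
  simp [uvec, PiLp.inner_apply, Fin.sum_univ_two, Matrix.cons_val_zero, Matrix.cons_val_one]
  ring

lemma norm_le_abs (w : Plane) : ‖w‖ ≤ |w 0| + |w 1| := by
  rw [EuclideanSpace.norm_eq]
  simp only [Fin.sum_univ_two, Real.norm_eq_abs]
  rw [show |w 0|^2 + |w 1|^2 = (w 0)^2 + (w 1)^2 by rw [sq_abs, sq_abs]]
  have h : (w 0)^2 + (w 1)^2 ≤ (|w 0| + |w 1|)^2 := by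
    nlinarith [sq_abs (w 0), sq_abs (w 1), mul_nonneg (abs_nonneg (w 0)) (abs_nonneg (w 1))]
  calc √((w 0)^2 + (w 1)^2) ≤ √((|w 0| + |w 1|)^2) := Real.sqrt_le_sqrt h
    _ = |w 0| + |w 1| := Real.sqrt_sq (by positivity)

lemma abs_cos_sub_cos_le (a b : ℝ) : |Real.cos a - Real.cos b| ≤ |a - b| := by
  rw [Real.cos_sub_cos, abs_mul, abs_mul, abs_neg, abs_two]
  have h1 : |Real.sin ((a+b)/2)| ≤ 1 := abs_le.mpr ⟨Real.neg_one_le_sin _, Real.sin_le_one _⟩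
  have h2 : |Real.sin ((a-b)/2)| ≤ |(a-b)/2| := Real.abs_sin_le_abs
  have h3 : |(a-b)/2| = |a-b|/2 := by rw [abs_div, abs_two]
  nlinarith [abs_nonneg (Real.sin ((a+b)/2)), abs_nonneg (Real.sin ((a-b)/2)), abs_nonneg (a-b)]

lemma abs_sin_sub_sin_le (a b : ℝ) : |Real.sin a - Real.sin b| ≤ |a - b| := by
  rw [Real.sin_sub_sin, abs_mul, abs_mul, abs_two]
  have h1 : |Real.cos ((a+b)/2)| ≤ 1 := abs_le.mpr ⟨Real.neg_one_le_cos _, Real.cos_le_one _⟩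
  have h2 : |Real.sin ((a-b)/2)| ≤ |(a-b)/2| := Real.abs_sin_le_abs
  have h3 : |(a-b)/2| = |a-b|/2 := by rw [abs_div, abs_two]
  nlinarith [abs_nonneg (Real.cos ((a+b)/2)), abs_nonneg (Real.sin ((a-b)/2)), abs_nonneg (a-b)]

lemma uvec_lip (a b : ℝ) : ‖uvec a - uvec b‖ ≤ 2 * |a - b| := by
  have h0 : (uvec a - uvec b) 0 = Real.cos a - Real.cos b := by simp [uvec]
  have h1 : (uvec a - uvec b) 1 = Real.sin a - Real.sin b := by simp [uvec]
  have hn := norm_le_abs (uvec a - uvec b)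
  rw [h0, h1] at hn
  have := _root_.abs_cos_sub_cos_le a b
  have := _root_.abs_sin_sub_sin_le a b
  linarith

lemma integral_abs_cos : ∫ θ in (0:ℝ)..(2*π), |Real.cos θ| = 4 := by
  have hpi := Real.pi_pos
  have i1 : ∫ θ in (0:ℝ)..(π/2), |Real.cos θ| = 1 := by
    rw [intervalIntegral.integral_congr (g := Real.cos) ?_, integral_cos]
    · simp
    · intro x hx
      rw [uIcc_of_le (by linarith)] at hx
      exact abs_of_nonneg (Real.cos_nonneg_of_mem_Icc ⟨by linarith [hx.1], hx.2⟩)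
  have i2 : ∫ θ in (π/2)..(π/2 + π), |Real.cos θ| = 2 := by
    rw [intervalIntegral.integral_congr (g := fun x => -Real.cos x) ?_]
    · rw [intervalIntegral.integral_neg, integral_cos]
      rw [Real.sin_add_pi, Real.sin_pi_div_two]; ring
    · intro x hx
      rw [uIcc_of_le (by linarith)] at hx
      exact abs_of_nonpos (Real.cos_nonpos_of_pi_div_two_le_of_le hx.1 (by linarith [hx.2]))
  have i3 : ∫ θ in (π/2 + π)..(2*π), |Real.cos θ| = 1 := by
    rw [intervalIntegral.integral_congr (g := Real.cos) ?_, integral_cos]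
    · rw [Real.sin_two_pi, Real.sin_add_pi, Real.sin_pi_div_two]; ring
    · intro x hx
      rw [uIcc_of_le (by linarith)] at hx
      show |Real.cos x| = Real.cos x
      have hc : Real.cos x = Real.cos (x - 2*π) := (Real.cos_sub_two_pi x).symm
      rw [hc]
      have hx2 : x - 2*π ∈ Icc (-(π/2)) (π/2) := by
        constructor <;> [linarith [hx.1]; linarith [hx.2]]
      exact abs_of_nonneg (Real.cos_nonneg_of_mem_Icc hx2)
  have hint : ∀ a b : ℝ, IntervalIntegrable (fun θ => |Real.cos θ|) MeasureTheory.volume a b :=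
    fun a b => (Real.continuous_cos.abs).intervalIntegrable a b
  have h12 := intervalIntegral.integral_add_adjacent_intervals (hint 0 (π/2)) (hint (π/2) (π/2+π))
  have h123 := intervalIntegral.integral_add_adjacent_intervals (hint 0 (π/2+π)) (hint (π/2+π) (2*π))
  rw [← h123, ← h12, i1, i2, i3]; norm_num

lemma integral_abs_cos_shift (φ : ℝ) : ∫ θ in (0:ℝ)..(2*π), |Real.cos (θ - φ)| = 4 := by
  have hper : Function.Periodic (fun x => |Real.cos x|) (2*π) :=
    fun x => congrArg abs (Real.cos_periodic x)
  rw [intervalIntegral.integral_comp_sub_right (fun x => |Real.cos x|) φ]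
  have := hper.intervalIntegral_add_eq (0 - φ) 0
  rw [zero_add] at this
  rw [show (2*π - φ) = 0 - φ + 2*π by ring, this, integral_abs_cos]

lemma integral_abs_inner_uvec (v : Plane) :
    ∫ θ in (0:ℝ)..(2*π), |⟪v, uvec θ⟫| = 4 * ‖v‖ := by
  by_cases hv : v = 0
  · simp [hv]
  set z : ℂ := ⟨v 0, v 1⟩ with hz
  have hz0 : z ≠ 0 := by
    intro h
    apply hv
    have h0 : v 0 = 0 := congrArg Complex.re h
    have h1 : v 1 = 0 := congrArg Complex.im h
    ext i; fin_cases i <;> simpa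
  have habs : ‖z‖ = ‖v‖ := by
    rw [Complex.norm_def, Complex.normSq_mk, EuclideanSpace.norm_eq]
    simp only [Fin.sum_univ_two, Real.norm_eq_abs, sq_abs]
    ring_nf
  have hcos : v 0 = ‖v‖ * Real.cos (Complex.arg z) := by
    rw [Complex.cos_arg hz0, habs]
    have : ‖v‖ ≠ 0 := by simpa [habs] using (norm_ne_zero_iff.mpr hz0)
    field_simp
    rfl
  have hsin : v 1 = ‖v‖ * Real.sin (Complex.arg z) := by
    rw [Complex.sin_arg, habs]
    have : ‖v‖ ≠ 0 := by simpa [habs] using (norm_ne_zero_iff.mpr hz0)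
    field_simp
    rfl
  have key : ∀ θ, ⟪v, uvec θ⟫ = ‖v‖ * Real.cos (θ - Complex.arg z) := by
    intro θ
    rw [inner_uvec, hcos, hsin, Real.cos_sub]
    ring
  calc ∫ θ in (0:ℝ)..(2*π), |⟪v, uvec θ⟫|
      = ∫ θ in (0:ℝ)..(2*π), ‖v‖ * |Real.cos (θ - Complex.arg z)| := by
        apply intervalIntegral.integral_congr
        intro θ _
        show |⟪v, uvec θ⟫| = ‖v‖ * |Real.cos (θ - Complex.arg z)|
        rw [key θ, abs_mul, abs_of_nonneg (norm_nonneg v)]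
    _ = ‖v‖ * ∫ θ in (0:ℝ)..(2*π), |Real.cos (θ - Complex.arg z)| :=
        intervalIntegral.integral_const_mul _ _
    _ = 4 * ‖v‖ := by rw [integral_abs_cos_shift]; ring

lemma cont_inner_uvec (v : Plane) : Continuous (fun θ => ⟪v, uvec θ⟫) := by
  have : (fun θ => ⟪v, uvec θ⟫) = fun θ => v 0 * Real.cos θ + v 1 * Real.sin θ :=
    funext (inner_uvec v)
  rw [this]; fun_prop

lemma cont_inner_uvec' (θ : ℝ) : Continuous (fun x : Plane => ⟪x, uvec θ⟫) :=
  continuous_id.inner continuous_const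

section Supp
variable {C : Set Plane}

lemma supp_attained (hC : IsCompact C) (hne : C.Nonempty) (θ : ℝ) :
    ∃ x ∈ C, supp C θ = ⟪x, uvec θ⟫ ∧ ∀ y ∈ C, ⟪y, uvec θ⟫ ≤ ⟪x, uvec θ⟫ := by
  obtain ⟨x, hx, hmax⟩ := hC.exists_isMaxOn hne ((cont_inner_uvec' θ).continuousOn)
  refine ⟨x, hx, ?_, fun y hy => hmax hy⟩
  refine le_antisymm (csSup_le (hne.image _) ?_) (le_csSup ?_ (mem_image_of_mem _ hx))
  · rintro y ⟨z, hz, rfl⟩; exact hmax hz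
  · exact ⟨⟪x, uvec θ⟫, fun y ⟨z, hz, hzy⟩ => hzy ▸ (hmax hz : ⟪z, uvec θ⟫ ≤ ⟪x, uvec θ⟫)⟩

lemma le_supp (hC : IsCompact C) (hne : C.Nonempty) (θ : ℝ) {x : Plane} (hx : x ∈ C) :
    ⟪x, uvec θ⟫ ≤ supp C θ := by
  obtain ⟨z, hz, heq, hmax⟩ := supp_attained hC hne θ
  rw [heq]; exact hmax x hx

lemma supp_per (θ : ℝ) : supp C (θ + 2*π) = supp C θ := by
  unfold supp; rw [uvec_per]

lemma supp_continuous (hC : IsCompact C) (hne : C.Nonempty) : Continuous (supp C) := by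
  obtain ⟨R, hR0, hR⟩ : ∃ R, 0 ≤ R ∧ ∀ x ∈ C, ‖x‖ ≤ R := by
    obtain ⟨R, hR⟩ := hC.isBounded.exists_norm_le
    exact ⟨max R 0, le_max_right _ _, fun x hx => (hR x hx).trans (le_max_left _ _)⟩
  have key : ∀ a b : ℝ, supp C a ≤ supp C b + 2*R * (2 * |a - b|) := by
    intro a b
    obtain ⟨x, hx, heq, -⟩ := supp_attained hC hne a
    have h1 : ⟪x, uvec a⟫ = ⟪x, uvec b⟫ + ⟪x, uvec a - uvec b⟫ := by
      rw [inner_sub_right]; ring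
    have h2 : ⟪x, uvec a - uvec b⟫ ≤ ‖x‖ * ‖uvec a - uvec b‖ := real_inner_le_norm _ _
    have h3 := uvec_lip a b
    have h4 := le_supp hC hne b hx
    have h5 := hR x hx
    have h6 : ‖x‖ * ‖uvec a - uvec b‖ ≤ R * (2 * |a-b|) := by
      apply mul_le_mul h5 h3 (norm_nonneg _) hR0
    rw [heq, h1]
    nlinarith [abs_nonneg (a-b)]
  have hlip : LipschitzWith (4*R).toNNReal (supp C) := by
    apply LipschitzWith.of_dist_le_mul
    intro a b
    rw [Real.dist_eq, Real.dist_eq, Real.coe_toNNReal _ (by positivity : (0:ℝ) ≤ 4*R),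
      abs_sub_le_iff]
    have k1 := key a b
    have k2 := key b a
    rw [abs_sub_comm b a] at k2
    constructor <;> nlinarith [abs_nonneg (a-b)]
  exact hlip.continuous

end Supp

lemma tele_abs (G : ℕ → ℝ) {a b : ℕ} (hab : a ≤ b) :
    |G b - G a| ≤ ∑ i ∈ Finset.Ico a b, |G (i+1) - G i| := by
  have h1 : G b - G a = ∑ i ∈ Finset.Ico a b, (G (i+1) - G i) := by
    rw [Finset.sum_Ico_eq_sub _ hab, Finset.sum_range_sub, Finset.sum_range_sub]
    ring
  rw [h1]
  exact Finset.abs_sum_le_sum_abs _ _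

lemma tele_split (G : ℕ → ℝ) {N p q : ℕ} (hpq : p ≤ q) (hqN : q ≤ N) :
    |G p - G 0| + |G q - G p| + |G N - G q| ≤ ∑ i ∈ Finset.range N, |G (i+1) - G i| := by
  have e1 : ∑ i ∈ Finset.range N, |G (i+1) - G i| = ∑ i ∈ Finset.Ico 0 N, |G (i+1) - G i| := by
    rw [Finset.range_eq_Ico]
  have e2 := Finset.sum_Ico_consecutive (fun i => |G (i+1) - G i|) (Nat.zero_le p) (hpq.trans hqN)
  have e3 := Finset.sum_Ico_consecutive (fun i => |G (i+1) - G i|) hpq hqN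
  have t1 := tele_abs G (Nat.zero_le p)
  have t2 := tele_abs G hpq
  have t3 := tele_abs G hqN
  rw [e1, ← e2, ← e3]
  linarith

lemma sum_dist_le (ξ : ℝ → Plane) (hbv : BoundedVariationOn ξ (Icc 0 1))
    {N : ℕ} (hNpos : (0:ℝ) < N) :
    ∑ i ∈ Finset.range N, ‖ξ (((i:ℝ)+1)/N) - ξ ((i:ℝ)/N)‖ ≤ plen ξ := by
  set u : ℕ → ℝ := fun i => ((min i N : ℕ):ℝ)/N with hu_def
  have hu : Monotone u := by
    intro i j hij
    dsimp [u]
    have : ((min i N : ℕ):ℝ) ≤ ((min j N : ℕ):ℝ) := by exact_mod_cast min_le_min hij le_rfl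
    gcongr
  have hus : ∀ i, u i ∈ Icc (0:ℝ) 1 := by
    intro i
    constructor
    · positivity
    · dsimp [u]; rw [div_le_one hNpos]; exact_mod_cast min_le_right i N
  have key := eVariationOn.sum_le (f := ξ) (n := N) hu hus
  have huval : ∀ i ≤ N, u i = (i:ℝ)/N := by
    intro i hi
    dsimp [u]; rw [min_eq_left hi]
  calc ∑ i ∈ Finset.range N, ‖ξ (((i:ℝ)+1)/N) - ξ ((i:ℝ)/N)‖
      = ∑ i ∈ Finset.range N, (edist (ξ (u (i+1))) (ξ (u i))).toReal := by
        apply Finset.sum_congr rfl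
        intro i hi
        have hi' := Finset.mem_range.mp hi
        rw [huval (i+1) hi', huval i hi'.le]
        push_cast
        rw [← dist_edist, dist_eq_norm]
    _ = (∑ i ∈ Finset.range N, edist (ξ (u (i+1))) (ξ (u i))).toReal := by
        rw [ENNReal.toReal_sum (fun a _ => edist_ne_top _ _)]
    _ ≤ plen ξ := ENNReal.toReal_mono hbv key

lemma supp_integral_le (ξ : ℝ → Plane) (hc : ContinuousOn ξ (Icc 0 1))
    (hbv : BoundedVariationOn ξ (Icc 0 1)) :
    ∫ θ in (0:ℝ)..(2*π), supp (ξ '' Icc 0 1) θ ≤ plen ξ + ‖ξ 1 - ξ 0‖ := by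
  have hpi := Real.pi_pos
  set C := ξ '' Icc 0 1 with hCdef
  have hC : IsCompact C := isCompact_Icc.image_of_continuousOn hc
  have hne : C.Nonempty := (nonempty_Icc.mpr zero_le_one).image ξ
  have hcont : Continuous (supp C) := supp_continuous hC hne
  have hcontπ : Continuous (fun θ => supp C (θ + π)) :=
    hcont.comp (continuous_id.add continuous_const)
  have hper : Function.Periodic (supp C) (2*π) := fun θ => supp_per θ
  have hshift : ∫ θ in (0:ℝ)..(2*π), supp C (θ + π) = ∫ θ in (0:ℝ)..(2*π), supp C θ := by
    rw [intervalIntegral.integral_comp_add_right (supp C) π]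
    have h2 := hper.intervalIntegral_add_eq π 0
    rw [zero_add] at h2
    rw [show (0:ℝ) + π = π by ring, show 2*π + π = π + 2*π by ring, h2]
  have main : ∀ ε > 0, ∫ θ in (0:ℝ)..(2*π), supp C θ ≤ plen ξ + ‖ξ 1 - ξ 0‖ + 2*π*ε := by
    intro ε hε
    obtain ⟨δ, hδ, hu⟩ := (Metric.uniformContinuousOn_iff.mp
      (isCompact_Icc.uniformContinuousOn_of_continuous hc)) ε hε
    obtain ⟨N, hN⟩ := exists_nat_gt (1/δ)
    have hNpos : (0:ℝ) < N := lt_of_le_of_lt (by positivity) hN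
    have hNne : (N:ℝ) ≠ 0 := ne_of_gt hNpos
    have hinv : 1/(N:ℝ) < δ := by
      rw [div_lt_iff₀ hNpos]
      have := (div_lt_iff₀ hδ).mp hN
      linarith
    -- the pointwise claim
    have claim : ∀ θ : ℝ, 2*(supp C θ + supp C (θ + π)) ≤
        (∑ i ∈ Finset.range N, |⟪ξ (((i:ℝ)+1)/N) - ξ ((i:ℝ)/N), uvec θ⟫|)
          + |⟪ξ 1 - ξ 0, uvec θ⟫| + 4*ε := by
      intro θ
      set G : ℕ → ℝ := fun i => ⟪ξ ((i:ℝ)/N), uvec θ⟫ with hG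
      have hsum : ∑ i ∈ Finset.range N, |⟪ξ (((i:ℝ)+1)/N) - ξ ((i:ℝ)/N), uvec θ⟫|
          = ∑ i ∈ Finset.range N, |G (i+1) - G i| := by
        apply Finset.sum_congr rfl
        intro i _
        rw [hG]
        push_cast
        rw [inner_sub_left]
      have hG0 : G 0 = ⟪ξ 0, uvec θ⟫ := by rw [hG]; norm_num
      have hGN : G N = ⟪ξ 1, uvec θ⟫ := by
        show ⟪ξ ((N:ℝ)/N), uvec θ⟫ = _
        rw [div_self hNne]
      obtain ⟨x, hxC, hxeq, hxmax⟩ := supp_attained hC hne θ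
      obtain ⟨y, hyC, hyeq, hymax⟩ := supp_attained hC hne (θ + π)
      obtain ⟨tM, htM, hxval⟩ := hxC
      obtain ⟨tm, htm, hyval⟩ := hyC
      have hy2 : supp C (θ + π) = -⟪ξ tm, uvec θ⟫ := by
        rw [hyeq, ← hyval, uvec_add_pi, inner_neg_right]
      have hx2 : supp C θ = ⟪ξ tM, uvec θ⟫ := by rw [hxeq, hxval]
      -- grid approximation of a point
      have grid : ∀ t ∈ Icc (0:ℝ) 1, ∃ p ≤ N,
          |⟪ξ ((p:ℝ)/N) - ξ t, uvec θ⟫| ≤ ε := by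
        intro t ht
        set p := ⌊(N:ℝ) * t⌋₊ with hp
        have h1 : (p:ℝ) ≤ (N:ℝ)*t := Nat.floor_le (mul_nonneg hNpos.le ht.1)
        have hpN : p ≤ N := by
          have : (p:ℝ) ≤ (N:ℝ) := by nlinarith [ht.1, ht.2]
          exact_mod_cast this
        refine ⟨p, hpN, ?_⟩
        · 
          have h2 : (N:ℝ)*t < p + 1 := Nat.lt_floor_add_one _
          have hple : (p:ℝ)/N ≤ t := by rw [div_le_iff₀ hNpos]; linarith
          have hlt : t - (p:ℝ)/N < 1/N := by
            rw [sub_lt_iff_lt_add, ← add_div]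
            rw [lt_div_iff₀ hNpos]; linarith
          have hpin : (p:ℝ)/N ∈ Icc (0:ℝ) 1 := by
            constructor
            · positivity
            · rw [div_le_one hNpos]; nlinarith [ht.2]
          have hdist : dist ((p:ℝ)/N) t < δ := by
            rw [Real.dist_eq, abs_sub_comm, abs_of_nonneg (by linarith)]
            linarith
          have hξ := hu _ hpin _ ht hdist
          have hn : ‖ξ ((p:ℝ)/N) - ξ t‖ < ε := by rwa [← dist_eq_norm]
          refine le_trans (abs_real_inner_le_norm _ _) ?_
          rw [norm_uvec, mul_one]
          exact hn.le
      obtain ⟨p, hpN, hpε⟩ := grid tM htM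
      obtain ⟨q, hqN, hqε⟩ := grid tm htm
      have hfa : supp C θ - ε ≤ G p := by
        have : G p - ⟪ξ tM, uvec θ⟫ = ⟪ξ ((p:ℝ)/N) - ξ tM, uvec θ⟫ := by
          rw [hG, inner_sub_left]
        have habs := abs_le.mp hpε
        rw [hx2]; linarith [habs.1, this ▸ habs.1]
      have hfb : G q ≤ -supp C (θ + π) + ε := by
        have heq : G q - ⟪ξ tm, uvec θ⟫ = ⟪ξ ((q:ℝ)/N) - ξ tm, uvec θ⟫ := by
          rw [hG, inner_sub_left]
        have habs := abs_le.mp hqε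
        rw [hy2]
        have := heq ▸ habs.2
        linarith
      rw [hsum]
      have hd1 : |⟪ξ 1 - ξ 0, uvec θ⟫| = |G N - G 0| := by
        rw [hG0, hGN, inner_sub_left]
      rw [hd1]
      rcases le_total p q with hpq | hqp
      · have ht := tele_split G hpq hqN
        have a1 := le_abs_self (G p - G 0)
        have a2 := le_abs_self (G p - G q)
        have a3 := neg_abs_le (G q - G p)
        have a4 := le_abs_self (G N - G q)
        have a5 := neg_abs_le (G N - G 0)
        linarith [abs_sub_comm (G q) (G p) ▸ a2]
      · have ht := tele_split G hqp hpN
        have a1 := neg_abs_le (G q - G 0)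
        have a2 := le_abs_self (G p - G q)
        have a4 := neg_abs_le (G N - G p)
        have a5 := le_abs_self (G N - G 0)
        linarith
    -- integrate the claim
    have hSc : Continuous (fun θ => ∑ i ∈ Finset.range N,
        |⟪ξ (((i:ℝ)+1)/N) - ξ ((i:ℝ)/N), uvec θ⟫|) :=
      continuous_finset_sum _ (fun i _ => (cont_inner_uvec _).abs)
    have hLc : Continuous (fun θ => 2*(supp C θ + supp C (θ + π))) :=
      (continuous_const.mul (hcont.add hcontπ))
    have hRc : Continuous (fun θ => (∑ i ∈ Finset.range N,
        |⟪ξ (((i:ℝ)+1)/N) - ξ ((i:ℝ)/N), uvec θ⟫|) + |⟪ξ 1 - ξ 0, uvec θ⟫| + 4*ε) :=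
      (hSc.add (cont_inner_uvec _).abs).add continuous_const
    have hmono := intervalIntegral.integral_mono_on (μ := MeasureTheory.volume) (by positivity : (0:ℝ) ≤ 2*π)
      (hLc.intervalIntegrable _ _) (hRc.intervalIntegrable _ _)
      (fun θ _ => claim θ)
    have hL : ∫ θ in (0:ℝ)..(2*π), 2*(supp C θ + supp C (θ + π))
        = 4 * ∫ θ in (0:ℝ)..(2*π), supp C θ := by
      rw [intervalIntegral.integral_const_mul,
        intervalIntegral.integral_add (hcont.intervalIntegrable _ _)
          (hcontπ.intervalIntegrable _ _), hshift]
      ring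
    have hR : ∫ θ in (0:ℝ)..(2*π), ((∑ i ∈ Finset.range N,
        |⟪ξ (((i:ℝ)+1)/N) - ξ ((i:ℝ)/N), uvec θ⟫|) + |⟪ξ 1 - ξ 0, uvec θ⟫| + 4*ε)
        = (∑ i ∈ Finset.range N, 4 * ‖ξ (((i:ℝ)+1)/N) - ξ ((i:ℝ)/N)‖)
          + 4 * ‖ξ 1 - ξ 0‖ + 2*π*(4*ε) := by
      rw [intervalIntegral.integral_add (f := fun θ => (∑ i ∈ Finset.range N,
          |⟪ξ (((i:ℝ)+1)/N) - ξ ((i:ℝ)/N), uvec θ⟫|) + |⟪ξ 1 - ξ 0, uvec θ⟫|) (((hSc.add (cont_inner_uvec _).abs)).intervalIntegrable _ _)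
          ((continuous_const).intervalIntegrable _ _),
        intervalIntegral.integral_add (hSc.intervalIntegrable _ _)
          (((cont_inner_uvec _).abs).intervalIntegrable _ _),
        intervalIntegral.integral_finset_sum
          (fun i _ => ((cont_inner_uvec _).abs).intervalIntegrable _ _),
        integral_abs_inner_uvec, intervalIntegral.integral_const]
      congr 1
      · congr 1
        exact Finset.sum_congr rfl (fun i _ => integral_abs_inner_uvec _)
      · rw [smul_eq_mul]; ring
    rw [hL, hR] at hmono
    have hsum := sum_dist_le ξ hbv hNpos
    have : ∑ i ∈ Finset.range N, 4 * ‖ξ (((i:ℝ)+1)/N) - ξ ((i:ℝ)/N)‖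
        = 4 * ∑ i ∈ Finset.range N, ‖ξ (((i:ℝ)+1)/N) - ξ ((i:ℝ)/N)‖ := by
      rw [Finset.mul_sum]
    rw [this] at hmono
    linarith
  apply le_of_forall_pos_le_add
  intro ε hε
  have := main (ε / (2*π)) (by positivity)
  have h2 : 2*π*(ε/(2*π)) = ε := by field_simp
  linarith [h2 ▸ this]

/-- Lemma: sufficient conditions for optimality among net
counter-clockwise motions: a compatible net counter-clockwise motion that is
convex (its trajectory lengths equal the convex-hull perimeters minus the chord
lengths, via Cauchy's formula) and minimizes the sum of the support-function
integrals over all compatible net counter-clockwise motions is a shortest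
compatible net counter-clockwise motion. -/
theorem optimal_of_convex_and_minimal
    (s : ℝ) (hs : 0 < s) (A₀ B₀ A₁ B₁ : Plane) (ξA ξB : ℝ → Plane)
    (hm : IsCompatMotion s A₀ B₀ A₁ B₁ ξA ξB)
    (hccw : NetCCW ξA ξB)
    (hconvA : plen ξA = (∫ θ in (0:ℝ)..(2 * π), supp (ξA '' Icc 0 1) θ) - ‖A₁ - A₀‖)
    (hconvB : plen ξB = (∫ θ in (0:ℝ)..(2 * π), supp (ξB '' Icc 0 1) θ) - ‖B₁ - B₀‖)
    (hmin : ∀ ξA' ξB' : ℝ → Plane, IsCompatMotion s A₀ B₀ A₁ B₁ ξA' ξB' →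
      NetCCW ξA' ξB' →
      (∫ θ in (0:ℝ)..(2 * π), (supp (ξA '' Icc 0 1) θ + supp (ξB '' Icc 0 1) θ)) ≤
      (∫ θ in (0:ℝ)..(2 * π), (supp (ξA' '' Icc 0 1) θ + supp (ξB' '' Icc 0 1) θ))) :
    ∀ ξA' ξB' : ℝ → Plane, IsCompatMotion s A₀ B₀ A₁ B₁ ξA' ξB' → NetCCW ξA' ξB' →
      plen ξA + plen ξB ≤ plen ξA' + plen ξB' := by
  intro ξA' ξB' hm' hccw'
  have suppc : ∀ (ξ : ℝ → Plane), ContinuousOn ξ (Icc 0 1) →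
      Continuous (supp (ξ '' Icc 0 1)) := fun ξ h =>
    supp_continuous (isCompact_Icc.image_of_continuousOn h)
      ((nonempty_Icc.mpr zero_le_one).image ξ)
  have hIA' := supp_integral_le ξA' hm'.contA hm'.bvA
  rw [hm'.stopA, hm'.startA] at hIA'
  have hIB' := supp_integral_le ξB' hm'.contB hm'.bvB
  rw [hm'.stopB, hm'.startB] at hIB'
  have hmin' := hmin ξA' ξB' hm' hccw'
  have hsplit : ∫ θ in (0:ℝ)..(2 * π), (supp (ξA '' Icc 0 1) θ + supp (ξB '' Icc 0 1) θ)
      = (∫ θ in (0:ℝ)..(2 * π), supp (ξA '' Icc 0 1) θ)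
        + ∫ θ in (0:ℝ)..(2 * π), supp (ξB '' Icc 0 1) θ :=
    intervalIntegral.integral_add
      (((suppc ξA hm.contA)).intervalIntegrable _ _)
      (((suppc ξB hm.contB)).intervalIntegrable _ _)
  have hsplit' : ∫ θ in (0:ℝ)..(2 * π), (supp (ξA' '' Icc 0 1) θ + supp (ξB' '' Icc 0 1) θ)
      = (∫ θ in (0:ℝ)..(2 * π), supp (ξA' '' Icc 0 1) θ)
        + ∫ θ in (0:ℝ)..(2 * π), supp (ξB' '' Icc 0 1) θ :=
    intervalIntegral.integral_add
      (((suppc ξA' hm'.contA)).intervalIntegrable _ _)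
      (((suppc ξB' hm'.contB)).intervalIntegrable _ _)
  rw [hsplit, hsplit'] at hmin'
  linarith
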